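/- For every simple-clique 3-tree G on n ≥ 4 vertices, ε_Δ(G) ≥ 3: for every multiset D of at most 2 edges of G, the multiset sum of the edge set of G and D is not triangle decomposable. -/

import Mathlib

/-- A triangle on three distinct vertices, as a multiset of edges. -/
def IsTriangle {V : Type*} (t : Multiset (Sym2 V)) : Prop :=
  ∃ a b c : V, a ≠ b ∧ b ≠ c ∧ a ≠ c ∧ t = {s(a, b), s(b, c), s(a, c)}

/-- A multigraph (multiset of edges) is triangle decomposable if it is a sum of triangles. -/
def TriDecomp {V : Type*} (E : Multiset (Sym2 V)) : Prop :=
  ∃ T : Multiset (Multiset (Sym2 V)), (∀ t ∈ T, IsTriangle t) ∧ T.sum = E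

/-- The edge multiset of a simple graph on a finite vertex type. -/
noncomputable def edgeMS {V : Type*} [Fintype V] (G : SimpleGraph V) : Multiset (Sym2 V) :=
  G.edgeSet.toFinite.toFinset.val

/-- `ε_Δ(G)`: the least number of duplicated edges of `G` (a multiset of edges of `G`,
repetitions allowed) whose addition makes the edge multiset triangle decomposable. -/
noncomputable def epsDelta {V : Type*} [Fintype V] (G : SimpleGraph V) : ℕ :=
  sInf {k | ∃ D : Multiset (Sym2 V), D.card = k ∧ (∀ e ∈ D, e ∈ G.edgeSet) ∧
    TriDecomp (edgeMS G + D)}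

/-- The edge set of the simple-clique 3-tree construction on `Fin n`: start with the
complete graph `K_4` on `0,1,2,3`, and each vertex `k ≥ 4` is attached to the three
vertices `a k, b k, c k` of an existing triangle. -/
def sc3Edges (n : ℕ) (a b c : Fin n → Fin n) : Set (Sym2 (Fin n)) :=
  {e | (∃ i j : Fin n, (i : ℕ) < 4 ∧ (j : ℕ) < 4 ∧ i ≠ j ∧ e = s(i, j)) ∨
       ∃ k : Fin n, 4 ≤ (k : ℕ) ∧ (e = s(k, a k) ∨ e = s(k, b k) ∨ e = s(k, c k))}

/-- `G` is a simple-clique 3-tree: it is built from `K_4` by repeatedly adding a new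
vertex adjacent to exactly the three vertices of a triangle of the current graph, each
triangle being used as an attachment triangle at most once. -/
def IsSC3 {n : ℕ} (G : SimpleGraph (Fin n)) : Prop :=
  ∃ (_hn : 4 ≤ n) (a b c : Fin n → Fin n),
    (∀ k : Fin n, 4 ≤ (k : ℕ) →
      (a k : ℕ) < k ∧ (b k : ℕ) < k ∧ (c k : ℕ) < k ∧
      a k ≠ b k ∧ b k ≠ c k ∧ a k ≠ c k) ∧
    (∀ k : Fin n, 4 ≤ (k : ℕ) →
      s(a k, b k) ∈ sc3Edges n a b c ∧ s(b k, c k) ∈ sc3Edges n a b c ∧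
      s(a k, c k) ∈ sc3Edges n a b c) ∧
    (∀ k l : Fin n, 4 ≤ (k : ℕ) → 4 ≤ (l : ℕ) → k ≠ l →
      ({a k, b k, c k} : Finset (Fin n)) ≠ {a l, b l, c l}) ∧
    G = SimpleGraph.fromEdgeSet (sc3Edges n a b c)

/-- For every simple-clique 3-tree `G` on `n ≥ 4` vertices, `ε_Δ(G) ≥ 3`: adding any
multiset of at most two edges of `G` never yields a triangle decomposable multigraph. -/

def countAt {V : Type*} [DecidableEq V] (v : V) (E : Multiset (Sym2 V)) : ℕ :=
  (E.filter (fun e => v ∈ e)).card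

lemma countAt_add {V : Type*} [DecidableEq V] (v : V) (E F : Multiset (Sym2 V)) :
    countAt v (E + F) = countAt v E + countAt v F := by
  simp [countAt, Multiset.filter_add]

lemma IsTriangle.card3 {V : Type*} {t : Multiset (Sym2 V)} (h : IsTriangle t) :
    Multiset.card t = 3 := by
  obtain ⟨a, b, c, _, _, _, rfl⟩ := h; rfl

lemma IsTriangle.countAt_even {V : Type*} [DecidableEq V] (v : V) {t : Multiset (Sym2 V)}
    (h : IsTriangle t) : Even (countAt v t) := by
  obtain ⟨a, b, c, hab, hbc, hac, rfl⟩ := h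
  by_cases ha : v = a <;> by_cases hb : v = b <;> by_cases hc : v = c <;>
    simp_all [countAt, Multiset.filter_cons, Multiset.filter_singleton, Sym2.mem_iff]

lemma triDecomp_card {V : Type*} {E : Multiset (Sym2 V)} (h : TriDecomp E) :
    ∃ m, Multiset.card E = 3 * m := by
  obtain ⟨T, hT, rfl⟩ := h
  refine ⟨Multiset.card T, ?_⟩
  induction T using Multiset.induction with
  | empty => simp
  | cons t T ih =>
    simp only [Multiset.sum_cons, Multiset.card_add, Multiset.card_cons]
    rw [(hT t (Multiset.mem_cons_self t T)).card3, ih (fun u hu => hT u (Multiset.mem_cons_of_mem hu))]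
    ring

lemma triDecomp_countAt_even {V : Type*} [DecidableEq V] (v : V) {E : Multiset (Sym2 V)}
    (h : TriDecomp E) : Even (countAt v E) := by
  obtain ⟨T, hT, rfl⟩ := h
  induction T using Multiset.induction with
  | empty => simp [countAt]
  | cons t T ih =>
    rw [Multiset.sum_cons, countAt_add]
    exact ((hT t (Multiset.mem_cons_self t T)).countAt_even v).add
      (ih (fun u hu => hT u (Multiset.mem_cons_of_mem hu)))

-- key equality lemma for "max-vertex" edges

lemma sym2_eq_top {n : ℕ} {k x l y : Fin n} (hx : (x : ℕ) < k) (hy : (y : ℕ) < l) :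
    s(k, x) = s(l, y) ↔ k = l ∧ x = y := by
  rw [Sym2.eq_iff]
  constructor
  · rintro (⟨rfl, rfl⟩ | ⟨rfl, rfl⟩)
    · exact ⟨rfl, rfl⟩
    · omega
  · rintro ⟨rfl, rfl⟩; exact Or.inl ⟨rfl, rfl⟩

lemma sum_map_tri {α : Type*} (M : Multiset α) (f : α → Multiset α) (g : α → Multiset α)
    (h : ∀ e ∈ M, f e = e ::ₘ g e) : (M.map f).sum = M + M.bind g := by
  induction M using Multiset.induction with
  | empty => simp
  | cons a M ih =>
    rw [Multiset.map_cons, Multiset.sum_cons, h a (Multiset.mem_cons_self a M),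
      ih (fun e he => h e (Multiset.mem_cons_of_mem he)), Multiset.cons_bind]
    rw [Multiset.cons_add]
    rw [← Multiset.singleton_add, ← Multiset.singleton_add]
    abel

def msK4 (n : ℕ) (hn : 4 ≤ n) : Multiset (Sym2 (Fin n)) :=
  {s((⟨0, by omega⟩ : Fin n), (⟨1, by omega⟩ : Fin n)),
   s((⟨0, by omega⟩ : Fin n), (⟨2, by omega⟩ : Fin n)),
   s((⟨0, by omega⟩ : Fin n), (⟨3, by omega⟩ : Fin n)),
   s((⟨1, by omega⟩ : Fin n), (⟨2, by omega⟩ : Fin n)),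
   s((⟨1, by omega⟩ : Fin n), (⟨3, by omega⟩ : Fin n)),
   s((⟨2, by omega⟩ : Fin n), (⟨3, by omega⟩ : Fin n))}

def msBig (n : ℕ) (a b c : Fin n → Fin n) : Multiset (Sym2 (Fin n)) :=
  ((Finset.univ.filter (fun k : Fin n => 4 ≤ (k : ℕ))).val).bind
    (fun k => {s(k, a k), s(k, b k), s(k, c k)})

lemma mem_msK4 {n : ℕ} (hn : 4 ≤ n) (e : Sym2 (Fin n)) :
    e ∈ msK4 n hn ↔ ∃ i j : Fin n, (i : ℕ) < 4 ∧ (j : ℕ) < 4 ∧ i ≠ j ∧ e = s(i, j) := by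
  constructor
  · intro he
    simp only [msK4, Multiset.insert_eq_cons, Multiset.mem_cons, Multiset.mem_singleton] at he
    rcases he with rfl | rfl | rfl | rfl | rfl | rfl <;>
      exact ⟨_, _, by norm_num, by norm_num, by simp [Fin.ext_iff], rfl⟩
  · rintro ⟨i, j, hi, hj, hij, rfl⟩
    have hij' : (i : ℕ) ≠ (j : ℕ) := fun h => hij (Fin.ext h)
    have hi' : (i : ℕ) = 0 ∨ (i : ℕ) = 1 ∨ (i : ℕ) = 2 ∨ (i : ℕ) = 3 := by omega
    have hj' : (j : ℕ) = 0 ∨ (j : ℕ) = 1 ∨ (j : ℕ) = 2 ∨ (j : ℕ) = 3 := by omega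
    rcases hi' with hi0 | hi0 | hi0 | hi0 <;> rcases hj' with hj0 | hj0 | hj0 | hj0 <;>
      simp only [msK4, Multiset.insert_eq_cons, Multiset.mem_cons, Multiset.mem_singleton,
        Sym2.eq_iff, Fin.ext_iff, Fin.val_mk, hi0, hj0, true_and, and_true, or_true,
        true_or] <;> omega

lemma mem_msBig {n : ℕ} (a b c : Fin n → Fin n) (e : Sym2 (Fin n)) :
    e ∈ msBig n a b c ↔
      ∃ k : Fin n, 4 ≤ (k : ℕ) ∧ (e = s(k, a k) ∨ e = s(k, b k) ∨ e = s(k, c k)) := by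
  rw [msBig, Multiset.mem_bind]
  simp only [Finset.mem_val, Finset.mem_filter, Finset.mem_univ, true_and,
    Multiset.insert_eq_cons, Multiset.mem_cons, Multiset.mem_singleton]

lemma sym2_eq_top' {n : ℕ} {k x l y : Fin n} (hx : (x : ℕ) < k) (hy : (y : ℕ) < l) :
    s(k, x) = s(l, y) ↔ k = l ∧ x = y := by
  rw [Sym2.eq_iff]
  constructor
  · rintro (⟨rfl, rfl⟩ | ⟨rfl, rfl⟩)
    · exact ⟨rfl, rfl⟩
    · omega
  · rintro ⟨rfl, rfl⟩; exact Or.inl ⟨rfl, rfl⟩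

lemma nodup_msK4 {n : ℕ} (hn : 4 ≤ n) : (msK4 n hn).Nodup := by
  simp only [msK4, Multiset.insert_eq_cons, Multiset.nodup_cons, Multiset.mem_cons,
    Multiset.mem_singleton, Multiset.nodup_singleton, Sym2.eq_iff, Fin.ext_iff, Fin.val_mk]
  decide

lemma nodup_msBig {n : ℕ} {a b c : Fin n → Fin n}
    (hord : ∀ k : Fin n, 4 ≤ (k : ℕ) →
      (a k : ℕ) < k ∧ (b k : ℕ) < k ∧ (c k : ℕ) < k ∧
      a k ≠ b k ∧ b k ≠ c k ∧ a k ≠ c k) :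
    (msBig n a b c).Nodup := by
  rw [msBig, Multiset.nodup_bind]
  constructor
  · intro k hk
    simp only [Finset.mem_val, Finset.mem_filter, Finset.mem_univ, true_and] at hk
    obtain ⟨h1, h2, h3, h4, h5, h6⟩ := hord k hk
    simp only [Multiset.insert_eq_cons, Multiset.nodup_cons, Multiset.mem_cons,
      Multiset.mem_singleton, Multiset.nodup_singleton, sym2_eq_top' h1 h2,
      sym2_eq_top' h1 h3, sym2_eq_top' h2 h3, and_true]
    tauto
  · refine Multiset.Nodup.pairwise ?_ (Finset.nodup _)
    intro k hk l hl hkl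
    simp only [Finset.mem_val, Finset.mem_filter, Finset.mem_univ, true_and] at hk hl
    obtain ⟨hk1, hk2, hk3, -, -, -⟩ := hord k hk
    obtain ⟨hl1, hl2, hl3, -, -, -⟩ := hord l hl
    rw [Function.onFun, Multiset.disjoint_left]
    intro e he he'
    simp only [Multiset.insert_eq_cons, Multiset.mem_cons, Multiset.mem_singleton] at he he'
    rcases he with rfl | rfl | rfl <;> rcases he' with h | h | h <;>
      first
        | exact hkl ((sym2_eq_top' hk1 hl1).mp h).1 | exact hkl ((sym2_eq_top' hk1 hl2).mp h).1
        | exact hkl ((sym2_eq_top' hk1 hl3).mp h).1 | exact hkl ((sym2_eq_top' hk2 hl1).mp h).1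
        | exact hkl ((sym2_eq_top' hk2 hl2).mp h).1 | exact hkl ((sym2_eq_top' hk2 hl3).mp h).1
        | exact hkl ((sym2_eq_top' hk3 hl1).mp h).1 | exact hkl ((sym2_eq_top' hk3 hl2).mp h).1
        | exact hkl ((sym2_eq_top' hk3 hl3).mp h).1

lemma disjoint_msK4_msBig {n : ℕ} (hn : 4 ≤ n) {a b c : Fin n → Fin n}
    (hord : ∀ k : Fin n, 4 ≤ (k : ℕ) →
      (a k : ℕ) < k ∧ (b k : ℕ) < k ∧ (c k : ℕ) < k ∧
      a k ≠ b k ∧ b k ≠ c k ∧ a k ≠ c k) :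
    Disjoint (msK4 n hn) (msBig n a b c) := by
  rw [Multiset.disjoint_left]
  intro e he he'
  rw [mem_msK4] at he
  rw [mem_msBig] at he'
  obtain ⟨i, j, hi, hj, hij, rfl⟩ := he
  obtain ⟨k, hk, hke⟩ := he'
  obtain ⟨h1, h2, h3, -, -, -⟩ := hord k hk
  have : (i : ℕ) < k ∨ (j : ℕ) < k := by omega
  rcases hke with h | h | h <;> rw [Sym2.eq_iff] at h <;>
    rcases h with ⟨rfl, rfl⟩ | ⟨rfl, rfl⟩ <;> omega

lemma card_msK4 {n : ℕ} (hn : 4 ≤ n) : Multiset.card (msK4 n hn) = 6 := rfl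

lemma card_msBig {n : ℕ} (a b c : Fin n → Fin n) :
    ∃ m, Multiset.card (msBig n a b c) = 3 * m := by
  refine ⟨(Finset.univ.filter (fun k : Fin n => 4 ≤ (k : ℕ))).card, ?_⟩
  rw [msBig, Multiset.card_bind]
  rw [show ((Finset.univ.filter (fun k : Fin n => 4 ≤ (k : ℕ))).val.map
      (Multiset.card ∘ fun k => ({s(k, a k), s(k, b k), s(k, c k)} : Multiset (Sym2 (Fin n)))))
      = (Finset.univ.filter (fun k : Fin n => 4 ≤ (k : ℕ))).val.map (fun _ => 3) from
    Multiset.map_congr rfl (fun k _ => rfl)]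
  simp [Multiset.map_const', mul_comm, Finset.card_def, Finset.filter_val]

lemma countAt_sum {V : Type*} [DecidableEq V] (v : V) (L : Multiset (Multiset (Sym2 V))) :
    countAt v L.sum = (L.map (countAt v)).sum := by
  induction L using Multiset.induction with
  | empty => simp [countAt]
  | cons t L ih => simp [countAt_add, ih]

lemma countAt_bind {V : Type*} [DecidableEq V] {α : Type*} (v : V) (s : Multiset α)
    (f : α → Multiset (Sym2 V)) :
    countAt v (s.bind f) = (s.map (fun k => countAt v (f k))).sum := by
  induction s using Multiset.induction with
  | empty => simp [countAt]
  | cons t s ih => simp [Multiset.cons_bind, countAt_add, ih]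

lemma countAt_last {n : ℕ} (hn : 4 ≤ n) {a b c : Fin n → Fin n}
    (hord : ∀ k : Fin n, 4 ≤ (k : ℕ) →
      (a k : ℕ) < k ∧ (b k : ℕ) < k ∧ (c k : ℕ) < k ∧
      a k ≠ b k ∧ b k ≠ c k ∧ a k ≠ c k) :
    countAt (⟨n - 1, by omega⟩ : Fin n) (msK4 n hn + msBig n a b c) = 3 := by
  rw [countAt_add]
  rcases eq_or_lt_of_le hn with h4 | h5
  · -- n = 4
    subst h4
    have hbig : msBig 4 a b c = 0 := by
      rw [msBig]
      have : (Finset.univ.filter (fun k : Fin 4 => 4 ≤ (k : ℕ))) = ∅ := by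
        rw [Finset.filter_eq_empty_iff]
        intro k _
        omega
      rw [this]
      rfl
    rw [hbig]
    exact (by decide : countAt (⟨4 - 1, by norm_num⟩ : Fin 4) (msK4 4 (by norm_num)) +
      countAt (⟨4 - 1, by norm_num⟩ : Fin 4) (0 : Multiset (Sym2 (Fin 4))) = 3)
  · -- n ≥ 5
    set v : Fin n := ⟨n - 1, by omega⟩ with hv
    have hv4 : 4 ≤ (v : ℕ) := by simp only [hv, Fin.val_mk]; omega
    have hK4 : countAt v (msK4 n hn) = 0 := by
      rw [countAt, Multiset.card_eq_zero, Multiset.filter_eq_nil]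
      intro e he
      rw [mem_msK4] at he
      obtain ⟨i, j, hi, hj, -, rfl⟩ := he
      rw [Sym2.mem_iff]
      rintro (rfl | rfl) <;> omega
    have hBig : countAt v (msBig n a b c) = 3 := by
      rw [msBig, countAt_bind, ← Finset.sum_eq_multiset_sum]
      rw [Finset.sum_eq_single_of_mem v (by simp only [Finset.mem_filter, Finset.mem_univ, true_and]; exact hv4)]
      · obtain ⟨h1, h2, h3, -, -, -⟩ := hord v hv4
        rw [countAt, Multiset.filter_eq_self.2]
        · rfl
        · intro e he
          simp only [Multiset.insert_eq_cons, Multiset.mem_cons, Multiset.mem_singleton] at he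
          rcases he with rfl | rfl | rfl <;> exact Sym2.mem_mk_left _ _
      · intro k hk hkv
        simp only [Finset.mem_filter, Finset.mem_univ, true_and] at hk
        obtain ⟨h1, h2, h3, -, -, -⟩ := hord k hk
        have hkn : (k : ℕ) < n := k.isLt
        have hvv : (v : ℕ) = n - 1 := by simp only [hv, Fin.val_mk]
        have hvk : v ≠ k := fun h => hkv h.symm
        have hvk' : (v : ℕ) ≠ (k : ℕ) := fun h => hvk (Fin.ext h)
        rw [countAt, Multiset.card_eq_zero, Multiset.filter_eq_nil]
        intro e he
        simp only [Multiset.insert_eq_cons, Multiset.mem_cons, Multiset.mem_singleton] at he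
        rcases he with rfl | rfl | rfl <;> rw [Sym2.mem_iff] <;> rintro (rfl | h) <;>
          first
            | exact hvk' rfl
            | (rw [h] at hvv; omega)
    rw [hK4, hBig]

lemma sc3_edgeSet {n : ℕ} {a b c : Fin n → Fin n}
    (hord : ∀ k : Fin n, 4 ≤ (k : ℕ) →
      (a k : ℕ) < k ∧ (b k : ℕ) < k ∧ (c k : ℕ) < k ∧
      a k ≠ b k ∧ b k ≠ c k ∧ a k ≠ c k) :
    (SimpleGraph.fromEdgeSet (sc3Edges n a b c)).edgeSet = sc3Edges n a b c := by
  rw [SimpleGraph.edgeSet_fromEdgeSet]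
  refine sdiff_eq_self_iff_disjoint.mpr (Set.disjoint_left.mpr ?_)
  rintro e hd hS
  simp only [Sym2.mem_diagSet] at hd
  rcases hS with ⟨i, j, hi, hj, hij, rfl⟩ | ⟨k, hk, h | h | h⟩
  · rw [Sym2.mk_isDiag_iff] at hd; exact hij hd
  · obtain ⟨h1, -, -, -, -, -⟩ := hord k hk
    rw [h, Sym2.mk_isDiag_iff] at hd; omega
  · obtain ⟨-, h2, -, -, -, -⟩ := hord k hk
    rw [h, Sym2.mk_isDiag_iff] at hd; omega
  · obtain ⟨-, -, h3, -, -, -⟩ := hord k hk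
    rw [h, Sym2.mk_isDiag_iff] at hd; omega

lemma mem_edgeMS {V : Type*} [Fintype V] {G : SimpleGraph V} {e : Sym2 V} :
    e ∈ edgeMS G ↔ e ∈ G.edgeSet := by
  rw [edgeMS, ← Finset.mem_def, Set.Finite.mem_toFinset]

lemma edgeMS_sc3 {n : ℕ} (hn : 4 ≤ n) {a b c : Fin n → Fin n}
    (hord : ∀ k : Fin n, 4 ≤ (k : ℕ) →
      (a k : ℕ) < k ∧ (b k : ℕ) < k ∧ (c k : ℕ) < k ∧
      a k ≠ b k ∧ b k ≠ c k ∧ a k ≠ c k) :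
    edgeMS (SimpleGraph.fromEdgeSet (sc3Edges n a b c)) = msK4 n hn + msBig n a b c := by
  refine (Multiset.Nodup.ext (Finset.nodup _)
    (Multiset.nodup_add.2 ⟨nodup_msK4 hn, nodup_msBig hord, disjoint_msK4_msBig hn hord⟩)).mpr ?_
  intro e
  rw [← Finset.mem_def, Set.Finite.mem_toFinset, sc3_edgeSet hord, Multiset.mem_add,
    mem_msK4 hn, mem_msBig]
  exact Iff.rfl

theorem sc3_epsDelta_ge_three {n : ℕ} (G : SimpleGraph (Fin n)) (hG : IsSC3 G) :
    3 ≤ epsDelta G ∧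
    ∀ D : Multiset (Sym2 (Fin n)), (∀ e ∈ D, e ∈ G.edgeSet) → D.card ≤ 2 →
      ¬ TriDecomp (edgeMS G + D) := by
  obtain ⟨hn, a, b, c, hord, htri, -, rfl⟩ := hG
  set G := SimpleGraph.fromEdgeSet (sc3Edges n a b c) with hG
  have hES : G.edgeSet = sc3Edges n a b c := sc3_edgeSet hord
  have hE : edgeMS G = msK4 n hn + msBig n a b c := edgeMS_sc3 hn hord
  obtain ⟨m, hm⟩ := card_msBig a b c
  have hcard : Multiset.card (edgeMS G) = 3 * (2 + m) := by
    rw [hE, Multiset.card_add, card_msK4, hm]; ring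
  have main : ∀ D : Multiset (Sym2 (Fin n)), D.card ≤ 2 → ¬ TriDecomp (edgeMS G + D) := by
    intro D hD2 hdec
    obtain ⟨m', hm'⟩ := triDecomp_card hdec
    rw [Multiset.card_add, hcard] at hm'
    have hD0 : D.card = 0 := by omega
    rw [Multiset.card_eq_zero] at hD0
    rw [hD0, add_zero] at hdec
    have heven := triDecomp_countAt_even (⟨n - 1, by omega⟩ : Fin n) hdec
    rw [hE, countAt_last hn hord] at heven
    exact (by decide : ¬ Even 3) heven
  refine ⟨?_, fun D _ h2 => main D h2⟩
  -- nonemptiness of the defining set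
  have hedge : ∀ e ∈ G.edgeSet, ∃ p : Fin n × Fin n × Fin n,
      p.1 ≠ p.2.1 ∧ p.2.1 ≠ p.2.2 ∧ p.1 ≠ p.2.2 ∧ e = s(p.1, p.2.1) ∧
      s(p.2.1, p.2.2) ∈ G.edgeSet ∧ s(p.1, p.2.2) ∈ G.edgeSet := by
    intro e he
    rw [hES] at he
    rcases he with ⟨i, j, hi, hj, hij, rfl⟩ | ⟨k, hk, he | he | he⟩
    · have hij' : (i : ℕ) ≠ (j : ℕ) := fun h => hij (Fin.ext h)
      have hz : ∃ mv, mv < 4 ∧ mv ≠ (i : ℕ) ∧ mv ≠ (j : ℕ) := by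
        refine ⟨if (i : ℕ) ≠ 0 ∧ (j : ℕ) ≠ 0 then 0 else
          if (i : ℕ) ≠ 1 ∧ (j : ℕ) ≠ 1 then 1 else 2, ?_⟩
        split_ifs with h1 h2 <;> omega
      obtain ⟨mv, hm4, hmi, hmj⟩ := hz
      refine ⟨⟨i, j, ⟨mv, by omega⟩⟩, hij, ?_, ?_, rfl, ?_, ?_⟩
      · exact Fin.ne_of_val_ne (show (j : ℕ) ≠ mv by omega)
      · exact Fin.ne_of_val_ne (show (i : ℕ) ≠ mv by omega)
      · rw [hES]; exact Or.inl ⟨j, ⟨mv, by omega⟩, hj, show mv < 4 from hm4,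
          Fin.ne_of_val_ne (show (j : ℕ) ≠ mv by omega), rfl⟩
      · rw [hES]; exact Or.inl ⟨i, ⟨mv, by omega⟩, hi, show mv < 4 from hm4,
          Fin.ne_of_val_ne (show (i : ℕ) ≠ mv by omega), rfl⟩
    · obtain ⟨h1, h2, h3, h4, h5, h6⟩ := hord k hk
      refine ⟨⟨k, a k, b k⟩, Fin.ne_of_val_ne (show (k : ℕ) ≠ (a k : ℕ) by omega), h4,
        Fin.ne_of_val_ne (show (k : ℕ) ≠ (b k : ℕ) by omega), he, ?_, ?_⟩
      · rw [hES]; exact (htri k hk).1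
      · rw [hES]; exact Or.inr ⟨k, hk, Or.inr (Or.inl rfl)⟩
    · obtain ⟨h1, h2, h3, h4, h5, h6⟩ := hord k hk
      refine ⟨⟨k, b k, c k⟩, Fin.ne_of_val_ne (show (k : ℕ) ≠ (b k : ℕ) by omega), h5,
        Fin.ne_of_val_ne (show (k : ℕ) ≠ (c k : ℕ) by omega), he, ?_, ?_⟩
      · rw [hES]; exact (htri k hk).2.1
      · rw [hES]; exact Or.inr ⟨k, hk, Or.inr (Or.inr rfl)⟩
    · obtain ⟨h1, h2, h3, h4, h5, h6⟩ := hord k hk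
      refine ⟨⟨k, c k, a k⟩, Fin.ne_of_val_ne (show (k : ℕ) ≠ (c k : ℕ) by omega),
        fun h => h6 h.symm, Fin.ne_of_val_ne (show (k : ℕ) ≠ (a k : ℕ) by omega), he, ?_, ?_⟩
      · rw [hES, Sym2.eq_swap]; exact (htri k hk).2.2
      · rw [hES]; exact Or.inr ⟨k, hk, Or.inl rfl⟩
  have : Inhabited (Fin n) := ⟨⟨0, by omega⟩⟩
  choose! p hp1 hp2 hp3 hp4 hp5 hp6 using hedge
  let x : Sym2 (Fin n) → Fin n := fun e => (p e).1
  let y : Sym2 (Fin n) → Fin n := fun e => (p e).2.1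
  let z : Sym2 (Fin n) → Fin n := fun e => (p e).2.2
  have hne : {k | ∃ D : Multiset (Sym2 (Fin n)), D.card = k ∧ (∀ e ∈ D, e ∈ G.edgeSet) ∧
      TriDecomp (edgeMS G + D)}.Nonempty := by
    refine ⟨_, (edgeMS G).bind (fun e => ({s(y e, z e), s(x e, z e)} : Multiset _)), rfl, ?_, ?_⟩
    · intro f hf
      rw [Multiset.mem_bind] at hf
      obtain ⟨e, he, hf⟩ := hf
      rw [mem_edgeMS] at he
      simp only [Multiset.insert_eq_cons, Multiset.mem_cons, Multiset.mem_singleton] at hf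
      rcases hf with rfl | rfl
      · exact hp5 e he
      · exact hp6 e he
    · refine ⟨(edgeMS G).map
        (fun e => ({s(x e, y e), s(y e, z e), s(x e, z e)} : Multiset (Sym2 (Fin n)))), ?_, ?_⟩
      · intro t ht
        rw [Multiset.mem_map] at ht
        obtain ⟨e, he, rfl⟩ := ht
        rw [mem_edgeMS] at he
        exact ⟨x e, y e, z e, hp1 e he, hp2 e he, hp3 e he, rfl⟩
      · refine sum_map_tri (edgeMS G) _ _ ?_
        intro e he
        rw [mem_edgeMS] at he
        rw [Multiset.insert_eq_cons, ← hp4 e he]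
  obtain ⟨D, hDcard, hDsub, hDdec⟩ := Nat.sInf_mem hne
  by_contra hlt
  push_neg at hlt
  rw [epsDelta] at hlt
  exact main D (by omega) hDdec
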